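/- Let G be a finite group, p a prime, e ≥ 0, and M a proper subgroup of G such that M contains N_G(S) for some Sylow p-subgroup S of G, and such that for every p-subgroup P of M with |P| > p^e, every p-subgroup Q of G containing P lies in M. Then M is strongly p^{e+1}-embedded in G, i.e. p^{e+1} divides |M| and p^{e+1} does not divide |M ∩ M^x| for every x ∈ G \ M. -/

import Mathlib

open Pointwise

/-- If a proper subgroup `M < G` contains `N_G(S)` for some Sylow
`p`-subgroup `S` of `G`, and every `p`-subgroup `Q` of `G` containing some `p`-subgroup
`P ≤ M` with `|P| > p^e` lies in `M`, then `M` is strongly `p^(e+1)`-embedded in `G`. -/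
theorem stmt1 {G : Type*} [Group G] [Fintype G] (p : ℕ) [Fact p.Prime] (e : ℕ)
    (M : Subgroup G) (hM : M ≠ ⊤)
    (hdvdG : p ^ (e + 1) ∣ Nat.card G)
    (hS : ∃ S : Sylow p G, Subgroup.normalizer ((S : Subgroup G) : Set G) ≤ M)
    (hup : ∀ P Q : Subgroup G, P ≤ M → IsPGroup p P → p ^ e < Nat.card P →
      IsPGroup p Q → P ≤ Q → Q ≤ M) :
    p ^ (e + 1) ∣ Nat.card M ∧
      ∀ x : G, x ∉ M → ¬ p ^ (e + 1) ∣ Nat.card ↥(M ⊓ (MulAut.conj x⁻¹ • M)) := by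
  classical
  obtain ⟨S, hNS⟩ := hS
  have hSM : (S : Subgroup G) ≤ M := Subgroup.le_normalizer.trans hNS
  have hp : p.Prime := Fact.out
  have hcardS : p ^ (e + 1) ∣ Nat.card (S : Subgroup G) := by
    rw [Sylow.card_eq_multiplicity]
    exact pow_dvd_pow p ((hp.pow_dvd_iff_le_factorization Nat.card_pos.ne').mp hdvdG)
  refine ⟨hcardS.trans (Subgroup.card_dvd_of_le hSM), ?_⟩
  intro x hx hdvd
  set K : Subgroup G := M ⊓ (MulAut.conj x⁻¹ • M) with hKdef
  obtain ⟨R⟩ : Nonempty (Sylow p ↥K) := inferInstance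
  set P : Subgroup G := Subgroup.map K.subtype ↑R with hPdef
  have hcardP : Nat.card P = Nat.card (R : Subgroup ↥K) :=
    (Nat.card_congr
      ((R : Subgroup ↥K).equivMapOfInjective K.subtype K.subtype_injective).toEquiv).symm
  have hdvdP : p ^ (e + 1) ∣ Nat.card P := by
    rw [hcardP, Sylow.card_eq_multiplicity]
    exact pow_dvd_pow p ((hp.pow_dvd_iff_le_factorization Nat.card_pos.ne').mp hdvd)
  have hpP : IsPGroup p P := R.isPGroup'.map K.subtype
  have hPK : P ≤ K := Subgroup.map_subtype_le _
  have hPM : P ≤ M := hPK.trans inf_le_left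
  have hcardgt : p ^ e < Nat.card P :=
    lt_of_lt_of_le (Nat.pow_lt_pow_succ hp.one_lt) (Nat.le_of_dvd Nat.card_pos hdvdP)
  obtain ⟨T, hPT⟩ := hpP.exists_le_sylow
  have hTM : (T : Subgroup G) ≤ M := hup P T hPM hpP hcardgt T.isPGroup' hPT
  -- the conjugate p-subgroup
  set P' : Subgroup G := MulAut.conj x • P with hP'def
  have hP'M : P' ≤ M := by
    have h0 : P ≤ MulAut.conj x⁻¹ • M := hPK.trans inf_le_right
    have h1 : MulAut.conj x • P ≤ MulAut.conj x • (MulAut.conj x⁻¹ • M) :=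
      Subgroup.pointwise_smul_le_pointwise_smul_iff.mpr h0
    rwa [smul_smul, ← map_mul, mul_inv_cancel, map_one, one_smul] at h1
  have hcardP' : Nat.card P' = Nat.card P :=
    (Nat.card_congr (Subgroup.equivSMul (MulAut.conj x) P).toEquiv).symm
  have hpP' : IsPGroup p P' := by
    rw [hP'def, Subgroup.pointwise_smul_def]
    exact hpP.map _
  have hP'T' : P' ≤ ((x • T : Sylow p G) : Subgroup G) := by
    rw [Sylow.coe_subgroup_smul, hP'def]
    exact Subgroup.pointwise_smul_le_pointwise_smul_iff.mpr hPT
  have hT'M : ((x • T : Sylow p G) : Subgroup G) ≤ M :=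
    hup P' _ hP'M hpP' (by rw [hcardP']; exact hcardgt) (x • T).isPGroup' hP'T'
  -- Sylow conjugacy inside M
  obtain ⟨m, hm⟩ := MulAction.exists_smul_eq (↥M) (T.subtype hTM) ((x • T).subtype hT'M)
  rw [Sylow.smul_subtype] at hm
  have h2 : (↑m : G) • T = x • T := by
    have := Sylow.subtype_injective hm
    rwa [Subgroup.smul_def] at this
  obtain ⟨m₁, hm₁⟩ := MulAction.exists_smul_eq (↥M) (S.subtype hSM) (T.subtype hTM)
  rw [Sylow.smul_subtype] at hm₁
  have h1 : (↑m₁ : G) • S = T := by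
    have := Sylow.subtype_injective hm₁
    rwa [Subgroup.smul_def] at this
  -- the element normalizing S
  set h : G := (↑m₁ : G)⁻¹ * ((↑m : G)⁻¹ * x) * ↑m₁ with hhdef
  have hhS : h • S = S := by
    rw [hhdef, mul_smul, h1, mul_smul, mul_smul, ← h2, inv_smul_smul, ← h1, inv_smul_smul]
  have hhM : h ∈ M := hNS (Sylow.smul_eq_iff_mem_normalizer.mp hhS)
  have hxeq : x = ↑m * (↑m₁ * h * (↑m₁ : G)⁻¹) := by
    rw [hhdef]; group
  exact hx (hxeq ▸ mul_mem m.2 (mul_mem (mul_mem m₁.2 hhM) (inv_mem m₁.2)))
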